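/- Let p ∈ (1,2), q ∈ (p-1, p), N ≥ 1 with N(p-1) − q(N-1) > 0. Define Σ(x) = |x|^{-(p-q)/(q-p+1)} on ℝ^N \ {0}, and A₀ = ((q-p+1)/(p-q))·((N(p-1)−q(N-1))/(q-p+1))^{1/(q-p+1)}. Then for every A ≥ A₀, the function A·Σ is a classical stationary supersolution of ∂_t u = Δ_p u − |∇u|^q on ℝ^N \ {0}; that is, Δ_p(AΣ)(x) − |∇(AΣ)(x)|^q ≤ 0 for all x ≠ 0, where Δ_p v = div(|∇v|^{p-2}∇v). -/

import Mathlib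

theorem stmt_16 (N : ℕ) (hN : 1 ≤ N) (p q : ℝ) (hp1 : 1 < p) (hp2 : p < 2)
    (hq1 : p - 1 < q) (hq2 : q < p)
    (hNpq : 0 < (N : ℝ) * (p - 1) - q * (N - 1))
    (A₀ : ℝ)
    (hA₀ : A₀ = ((q - p + 1) / (p - q)) *
      (((N : ℝ) * (p - 1) - q * (N - 1)) / (q - p + 1)) ^ (1 / (q - p + 1))) :
    ∀ A : ℝ, A₀ ≤ A →
      ∀ f : ℝ → ℝ, (∀ r : ℝ, 0 < r → f r = A * r ^ (-(p - q) / (q - p + 1))) →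
      ∀ r : ℝ, 0 < r →
        |deriv f r| ^ (p - 2) *
            ((p - 1) * deriv (deriv f) r + ((N : ℝ) - 1) * deriv f r / r)
          - |deriv f r| ^ q ≤ 0 := by
  intro A hA f hf r hr
  set s : ℝ := q - p + 1 with hs_def
  have hs : 0 < s := by rw [hs_def]; linarith
  have hpq : 0 < p - q := by linarith
  set α : ℝ := -(p - q) / s with hα_def
  have hα1 : α - 1 = -(1 / s) := by
    rw [hα_def, hs_def]; field_simp [(show (0:ℝ) < q - p + 1 by linarith).ne']; ring
  set D : ℝ := ((N : ℝ) * (p - 1) - q * (N - 1)) / s with hD_def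
  have hD : 0 < D := div_pos hNpq hs
  have hA0pos : 0 < A₀ := by
    rw [hA₀]
    exact mul_pos (div_pos hs hpq) (Real.rpow_pos_of_pos hD _)
  have hApos : 0 < A := lt_of_lt_of_le hA0pos hA
  -- first derivative
  have hderiv : ∀ x : ℝ, 0 < x → deriv f x = A * α * x ^ (α - 1) := by
    intro x hx
    have hev : f =ᶠ[nhds x] fun y => A * y ^ α := by
      filter_upwards [Ioi_mem_nhds hx] with y hy using hf y hy
    rw [hev.deriv_eq]
    have h := ((Real.hasDerivAt_rpow_const (x := x) (p := α) (Or.inl hx.ne')).const_mul A).deriv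
    rw [h]; ring
  -- second derivative
  have hderiv2 : deriv (deriv f) r = A * α * (α - 1) * r ^ (α - 2) := by
    have hev : deriv f =ᶠ[nhds r] fun y => (A * α) * y ^ (α - 1) := by
      filter_upwards [Ioi_mem_nhds hr] with y hy using hderiv y hy
    rw [hev.deriv_eq]
    have h := ((Real.hasDerivAt_rpow_const (x := r) (p := α - 1)
      (Or.inl hr.ne')).const_mul (A * α)).deriv
    rw [h, show α - 1 - 1 = α - 2 by ring]; ring
  have hαneg : α < 0 := by
    rw [hα_def]
    exact div_neg_of_neg_of_pos (by linarith) hs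
  set B : ℝ := -(A * α) with hB_def
  have hBpos : 0 < B := by
    rw [hB_def]
    exact neg_pos.mpr (mul_neg_of_pos_of_neg hApos hαneg)
  have hrpow : ∀ t : ℝ, (0:ℝ) < r ^ t := fun t => Real.rpow_pos_of_pos hr t
  have habs : |deriv f r| = B * r ^ (α - 1) := by
    rw [hderiv r hr, abs_of_neg (mul_neg_of_neg_of_pos
      (mul_neg_of_pos_of_neg hApos hαneg) (hrpow _)), hB_def]
    ring
  -- B ≥ D ^ (1/s)
  have hBD : D ^ (1 / s) ≤ B := by
    have hBval : B = A * ((p - q) / s) := by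
      rw [hB_def, hα_def]; field_simp
    rw [hBval]
    calc D ^ (1 / s) = A₀ * ((p - q) / s) := by
          rw [hA₀]; field_simp
      _ ≤ A * ((p - q) / s) :=
          mul_le_mul_of_nonneg_right hA (le_of_lt (div_pos hpq hs))
  -- key inequality: B^(p-1) * D ≤ B^q
  have hkey : B ^ (p - 1) * D ≤ B ^ q := by
    have h1 : D ≤ B ^ s := by
      have h2 : (D ^ (1 / s)) ^ s ≤ B ^ s :=
        Real.rpow_le_rpow (Real.rpow_pos_of_pos hD _).le hBD hs.le
      rwa [← Real.rpow_mul hD.le, one_div_mul_cancel hs.ne', Real.rpow_one] at h2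
    calc B ^ (p - 1) * D ≤ B ^ (p - 1) * B ^ s :=
          mul_le_mul_of_nonneg_left h1 (Real.rpow_pos_of_pos hBpos _).le
      _ = B ^ q := by
          rw [← Real.rpow_add hBpos, hs_def]
          norm_num
  -- auxiliary rpow identities
  have h1 : (r ^ (α - 1)) ^ (p - 2) = r ^ ((α - 1) * (p - 2)) :=
    (Real.rpow_mul hr.le _ _).symm
  have h2 : (r ^ (α - 1)) ^ q = r ^ ((α - 1) * q) :=
    (Real.rpow_mul hr.le _ _).symm
  have h3 : r ^ (α - 1) / r = r ^ (α - 2) := by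
    have h := Real.rpow_sub hr (α - 1) 1
    rw [Real.rpow_one] at h
    rw [← h]
    congr 1
    ring
  have hexp : (α - 1) * (p - 2) + (α - 2) = (α - 1) * q := by
    have hα2 : α - 2 = -(1 / s) - 1 := by linarith [hα1]
    rw [hα1, hα2, hs_def]
    field_simp [(show (0:ℝ) < q - p + 1 by linarith).ne']
    ring
  have h4 : r ^ ((α - 1) * (p - 2)) * r ^ (α - 2) = r ^ ((α - 1) * q) := by
    rw [← Real.rpow_add hr, hexp]
  have h5 : B ^ (p - 2) * B = B ^ (p - 1) := by
    nth_rewrite 2 [← Real.rpow_one B]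
    rw [← Real.rpow_add hBpos]
    congr 1
    ring
  have hC : (p - 1) * (α - 1) + ((N : ℝ) - 1) + D = 0 := by
    rw [hα1, hD_def, hs_def]
    field_simp [(show (0:ℝ) < q - p + 1 by linarith).ne']
    ring
  have hmul : ∀ t : ℝ, (B * r ^ (α - 1)) ^ t = B ^ t * (r ^ (α - 1)) ^ t :=
    fun t => Real.mul_rpow hBpos.le (hrpow _).le
  rw [habs, hderiv r hr, hderiv2, hmul, hmul, h1, h2]
  have ebrk : (p - 1) * (A * α * (α - 1) * r ^ (α - 2)) +
      ((N : ℝ) - 1) * (A * α * r ^ (α - 1)) / r = B * D * r ^ (α - 2) := by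
    rw [show ((N:ℝ) - 1) * (A * α * r ^ (α - 1)) / r
        = ((N:ℝ) - 1) * (A * α) * (r ^ (α - 1) / r) by ring, h3, hB_def]
    linear_combination (A * α * r ^ (α - 2)) * hC
  rw [ebrk, show B ^ (p - 2) * r ^ ((α - 1) * (p - 2)) * (B * D * r ^ (α - 2))
      = (B ^ (p - 2) * B) * D * (r ^ ((α - 1) * (p - 2)) * r ^ (α - 2)) by ring,
    h5, h4]
  nlinarith [mul_le_mul_of_nonneg_right hkey (hrpow ((α - 1) * q)).le]
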